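/- Let p ≥ 13 be a prime with p ≡ 1 mod 4, and write p = 4N + 1. Define t : ℕ → ℚ by t₂ = 1/32 and t_n = −((4n−9)·(4n−5))/((4n)·(4n−2)) · t_{n−1} for all n ≥ 3. Then the p-adic valuation of t_{N+2} is 0; in particular t_{N+2} ≠ 0. -/
import Mathlib

private lemma val_nat_zero {p : ℕ} [Fact p.Prime] {m : ℕ} (h : ¬ p ∣ m) :
    padicValRat p (m : ℚ) = 0 := by
  rw [padicValRat.of_nat]
  exact_mod_cast padicValNat.eq_zero_of_not_dvd h

theorem psi_at_j_1728_nonzero_mod_p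
    (p N : ℕ) (hp : p.Prime) (hp13 : 13 ≤ p) (hpN : p = 4 * N + 1)
    (t : ℕ → ℚ) (h2 : t 2 = 1 / 32)
    (hrec : ∀ n : ℕ, 3 ≤ n →
      t n = -((((4 * n - 9 : ℕ) : ℚ) * ((4 * n - 5 : ℕ) : ℚ))
        / (((4 * n : ℕ) : ℚ) * ((4 * n - 2 : ℕ) : ℚ))) * t (n - 1)) :
    padicValRat p (t (N + 2)) = 0 ∧ t (N + 2) ≠ 0 := by
  haveI : Fact p.Prime := ⟨hp⟩
  -- p does not divide small numbers with the wrong residue mod 4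
  have notdvd : ∀ m : ℕ, 0 < m → m < 2 * p → m % 4 ≠ 1 → ¬ p ∣ m := by
    intro m h0 h2p hmod hdvd
    obtain ⟨k, rfl⟩ := hdvd
    rcases k with _ | _ | k
    · omega
    · omega
    · have : p * 2 ≤ p * (k + 1 + 1) := Nat.mul_le_mul_left p (by omega)
      omega
  have hdvd32 : ¬ p ∣ 32 := by
    intro h
    have h2' : p ∣ 2 := hp.dvd_of_dvd_pow (show p ∣ 2 ^ 5 by norm_num at h ⊢; exact h)
    have := Nat.le_of_dvd (by norm_num) h2'
    omega
  have key : ∀ k : ℕ, k ≤ N → t (k + 2) ≠ 0 ∧ padicValRat p (t (k + 2)) = 0 := by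
    intro k
    induction k with
    | zero =>
      intro _
      constructor
      · rw [h2]; norm_num
      · rw [h2]
        rw [padicValRat.div (p := p) (by norm_num) (by norm_num)]
        have : padicValRat p (32 : ℚ) = 0 := by
          have := val_nat_zero (p := p) (m := 32) hdvd32
          simpa using this
        rw [this, padicValRat.one]
        ring
    | succ k ih =>
      intro hk
      obtain ⟨ht0, htv⟩ := ih (by omega)
      have hn := hrec (k + 3) (by omega)
      simp only [show 4 * (k + 3) - 9 = 4 * k + 3 from by omega,
        show 4 * (k + 3) - 5 = 4 * k + 7 from by omega,
        show 4 * (k + 3) = 4 * k + 12 from by omega,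
        show 4 * (k + 3) - 2 = 4 * k + 10 from by omega,
        show 4 * k + 12 - 9 = 4 * k + 3 from by omega,
        show 4 * k + 12 - 5 = 4 * k + 7 from by omega,
        show 4 * k + 12 - 2 = 4 * k + 10 from by omega,
        show k + 3 - 1 = k + 2 from by omega] at hn
    -- nonvanishing of the four factors
      have ha : ((4 * k + 3 : ℕ) : ℚ) ≠ 0 := Nat.cast_ne_zero.mpr (by omega)
      have hb : ((4 * k + 7 : ℕ) : ℚ) ≠ 0 := Nat.cast_ne_zero.mpr (by omega)
      have hc : ((4 * k + 12 : ℕ) : ℚ) ≠ 0 := Nat.cast_ne_zero.mpr (by omega)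
      have hd : ((4 * k + 10 : ℕ) : ℚ) ≠ 0 := Nat.cast_ne_zero.mpr (by omega)
      have hq : (((4 * k + 3 : ℕ) : ℚ) * ((4 * k + 7 : ℕ) : ℚ)
          / (((4 * k + 12 : ℕ) : ℚ) * ((4 * k + 10 : ℕ) : ℚ))) ≠ 0 := by
        apply div_ne_zero (mul_ne_zero ha hb) (mul_ne_zero hc hd)
      have htn : t (k + 3) ≠ 0 := by
        rw [hn]
        exact mul_ne_zero (neg_ne_zero.mpr hq) ht0
      have va : padicValRat p ((4 * k + 3 : ℕ) : ℚ) = 0 :=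
        val_nat_zero (notdvd _ (by omega) (by omega) (by omega))
      have vb : padicValRat p ((4 * k + 7 : ℕ) : ℚ) = 0 :=
        val_nat_zero (notdvd _ (by omega) (by omega) (by omega))
      have vc : padicValRat p ((4 * k + 12 : ℕ) : ℚ) = 0 :=
        val_nat_zero (notdvd _ (by omega) (by omega) (by omega))
      have vd : padicValRat p ((4 * k + 10 : ℕ) : ℚ) = 0 :=
        val_nat_zero (notdvd _ (by omega) (by omega) (by omega))
      refine ⟨by simpa using htn, ?_⟩
      have : padicValRat p (t (k + 3)) = 0 := by
        rw [hn, neg_mul, padicValRat.neg,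
          padicValRat.mul hq ht0,
          padicValRat.div (p := p) (mul_ne_zero ha hb) (mul_ne_zero hc hd),
          padicValRat.mul ha hb, padicValRat.mul hc hd,
          va, vb, vc, vd, htv]
        ring
      simpa using this
  have := key N le_rfl
  exact ⟨this.2, this.1⟩
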